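/- arXiv:0906.2373 — 3 statements merged into one kernel-verified Lean document; each statement's English description precedes it below -/
import Mathlib

section
/- Let G be a Lie group and let F be a bi-invariant distribution on G. If a, b : ℝ → G are smooth curves tangent to F (i.e. a'(t) ∈ F_{a(t)} and b'(t) ∈ F_{b(t)} for all t), then the pointwise product curve c(t) = a(t)b(t) is tangent to F, i.e. c'(t) ∈ F_{c(t)} for all t. -/
open scoped Manifold

/-- If `a, b` are smooth curves tangent to a bi-invariant distribution `F`
on a Lie group, then the pointwise product curve `t ↦ a t * b t` is tangent to `F`. -/
theorem product_of_tangent_curves_is_tangent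
    {E : Type*} [NormedAddCommGroup E] [NormedSpace ℝ E]
    {H : Type*} [TopologicalSpace H] {I : ModelWithCorners ℝ E H}
    {G : Type*} [TopologicalSpace G] [ChartedSpace H G] [Group G] [LieGroup I (⊤ : ℕ∞) G]
    (F : ∀ g : G, Submodule ℝ (TangentSpace I g))
    (hbi : ∀ g : G,
      F g = (F 1).map (mfderiv I I (fun x : G => g * x) 1).toLinearMap ∧
      F g = (F 1).map (mfderiv I I (fun x : G => x * g) 1).toLinearMap)
    (a b : ℝ → G) (ha : ContMDiff 𝓘(ℝ, ℝ) I (⊤ : ℕ∞) a) (hb : ContMDiff 𝓘(ℝ, ℝ) I (⊤ : ℕ∞) b)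
    (hta : ∀ t : ℝ, mfderiv 𝓘(ℝ, ℝ) I a t (1 : ℝ)  ∈ F (a t))
    (htb : ∀ t : ℝ, mfderiv 𝓘(ℝ, ℝ) I b t (1 : ℝ)  ∈ F (b t)) :
    ∀ t : ℝ, mfderiv 𝓘(ℝ, ℝ) I (fun s : ℝ => a s * b s) t (1 : ℝ) ∈ F (a t * b t) := by
  intro t
  -- Left translation maps F y into F (x * y).
  have hL : ∀ x y : G, ∀ w ∈ F y, mfderiv I I (fun z : G => x * z) y w ∈ F (x * y) := by
    intro x y w hw
    rw [(hbi y).1] at hw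
    obtain ⟨u, hu, rfl⟩ := hw
    rw [(hbi (x * y)).1]
    refine ⟨u, hu, ?_⟩
    have hcomp : (fun z : G => x * y * z) = (fun z : G => x * z) ∘ fun z : G => y * z := by
      funext z; simp [mul_assoc]
    rw [hcomp]
    exact mfderiv_comp_apply_of_eq (hg := mdifferentiableAt_mul_left)
      (hf := mdifferentiableAt_mul_left) (hy := mul_one y) (x := (1 : G)) u
  -- Right translation maps F x into F (x * y).
  have hR : ∀ x y : G, ∀ w ∈ F x, mfderiv I I (fun z : G => z * y) x w ∈ F (x * y) := by
    intro x y w hw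
    rw [(hbi x).2] at hw
    obtain ⟨u, hu, rfl⟩ := hw
    rw [(hbi (x * y)).2]
    refine ⟨u, hu, ?_⟩
    have hcomp : (fun z : G => z * (x * y)) = (fun z : G => z * y) ∘ fun z : G => z * x := by
      funext z; simp [mul_assoc]
    rw [hcomp]
    exact mfderiv_comp_apply_of_eq (hg := mdifferentiableAt_mul_right)
      (hf := mdifferentiableAt_mul_right) (hy := one_mul x) (x := (1 : G)) u
  -- Differentiability facts
  have hat : MDifferentiableAt 𝓘(ℝ, ℝ) I a t := (ha t).mdifferentiableAt (by simp)
  have hbt : MDifferentiableAt 𝓘(ℝ, ℝ) I b t := (hb t).mdifferentiableAt (by simp)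
  have hab : MDifferentiableAt 𝓘(ℝ, ℝ) (I.prod I) (fun s : ℝ => (a s, b s)) t :=
    hat.prodMk hbt
  have hmul : MDifferentiableAt (I.prod I) I (fun p : G × G => p.1 * p.2) (a t, b t) :=
    (contMDiff_mul I (⊤ : ℕ∞)).mdifferentiableAt (by simp)
  -- Product rule
  have hc : mfderiv 𝓘(ℝ, ℝ) I (fun s : ℝ => a s * b s) t (1 : ℝ) =
      mfderiv I I (fun z : G => z * b t) (a t) (mfderiv 𝓘(ℝ, ℝ) I a t (1 : ℝ)) +
      mfderiv I I (fun z : G => a t * z) (b t) (mfderiv 𝓘(ℝ, ℝ) I b t (1 : ℝ)) := by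
    have hv : mfderiv 𝓘(ℝ, ℝ) (I.prod I) (fun s : ℝ => (a s, b s)) t (1 : ℝ) =
        (mfderiv 𝓘(ℝ, ℝ) I a t (1 : ℝ), mfderiv 𝓘(ℝ, ℝ) I b t (1 : ℝ)) := by
      rw [hat.mfderiv_prod hbt]; rfl
    have h2 := mfderiv_comp_apply t hmul hab (1 : ℝ)
    refine h2.trans ?_
    rw [hv]
    exact mfderiv_prod_eq_add_apply hmul
  rw [hc]
  exact (F (a t * b t)).add_mem (hR (a t) (b t) _ (hta t)) (hL (a t) (b t) _ (htb t))
end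

section
/- Let G be a Lie group and let F be a bi-invariant distribution on G. If a : ℝ → G is a smooth curve tangent to F (i.e. a'(t) ∈ F_{a(t)} for all t), then the pointwise inverse curve t ↦ a(t)⁻¹ is tangent to F, i.e. its velocity at each t lies in F_{a(t)⁻¹}. -/
open scoped Manifold

section Aux

variable {E : Type*} [NormedAddCommGroup E] [NormedSpace ℝ E]
    {H : Type*} [TopologicalSpace H] {I : ModelWithCorners ℝ E H}
    {G : Type*} [TopologicalSpace G] [ChartedSpace H G] [Group G] [LieGroup I (⊤ : ℕ∞) G]

lemma aux_right_one (g : G) (v : TangentSpace I (1 : G)) :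
    mfderiv I I (fun y : G => y * g⁻¹) g (mfderiv I I (fun y : G => y * g) 1 v) = v := by
  have h := mfderiv_comp_of_eq (I' := I)
    (mdifferentiableAt_mul_right (a := g⁻¹) (b := g))
    (mdifferentiableAt_mul_right (a := g) (b := (1 : G))) (one_mul g)
  have h2 : ((fun y : G => y * g⁻¹) ∘ fun y : G => y * g) = id := by
    funext y; simp [mul_assoc]
  rw [h2, mfderiv_id] at h
  have h3 := congrArg
    (fun (L : TangentSpace I (1 : G) →L[ℝ] TangentSpace I (1 : G)) => L v) h
  rw [one_mul] at h3
  exact h3.symm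

lemma aux_left_one (g : G) (v : TangentSpace I (g⁻¹ : G)) :
    mfderiv I I (fun y : G => g⁻¹ * y) 1 (mfderiv I I (fun y : G => g * y) g⁻¹ v) = v := by
  have h := mfderiv_comp_of_eq (I' := I)
    (mdifferentiableAt_mul_left (a := g⁻¹) (b := (1 : G)))
    (mdifferentiableAt_mul_left (a := g) (b := g⁻¹)) (mul_inv_cancel g)
  have h2 : ((fun y : G => g⁻¹ * y) ∘ fun y : G => g * y) = id := by
    funext y; simp [← mul_assoc]
  rw [h2, mfderiv_id] at h
  have h3 := congrArg
    (fun (L : TangentSpace I (g⁻¹ : G) →L[ℝ] TangentSpace I (g⁻¹ : G)) => L v) h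
  rw [mul_inv_cancel] at h3
  exact h3.symm

end Aux

/-- If `a` is a smooth curve tangent to a bi-invariant distribution `F`
on a Lie group, then the pointwise inverse curve `t ↦ (a t)⁻¹` is tangent to `F`. -/
theorem inverse_of_tangent_curve_is_tangent
    {E : Type*} [NormedAddCommGroup E] [NormedSpace ℝ E]
    {H : Type*} [TopologicalSpace H] {I : ModelWithCorners ℝ E H}
    {G : Type*} [TopologicalSpace G] [ChartedSpace H G] [Group G] [LieGroup I (⊤ : ℕ∞) G]
    (F : ∀ g : G, Submodule ℝ (TangentSpace I g))
    (hbi : ∀ g : G,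
      F g = (F 1).map (mfderiv I I (fun x : G => g * x) 1 : TangentSpace I (1 : G) →ₗ[ℝ] TangentSpace I (g * 1)) ∧
      F g = (F 1).map (mfderiv I I (fun x : G => x * g) 1 : TangentSpace I (1 : G) →ₗ[ℝ] TangentSpace I (1 * g)))
    (a : ℝ → G) (ha : ContMDiff 𝓘(ℝ, ℝ) I (⊤ : ℕ∞) a)
    (hta : ∀ t : ℝ, mfderiv 𝓘(ℝ, ℝ) I a t (1 : ℝ) ∈ F (a t)) :
    ∀ t : ℝ, mfderiv 𝓘(ℝ, ℝ) I (fun s : ℝ => (a s)⁻¹) t (1 : ℝ) ∈ F ((a t)⁻¹) := by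
  intro t
  have hbsm : ContMDiff 𝓘(ℝ, ℝ) I (⊤ : ℕ∞) (fun s : ℝ => (a s)⁻¹) := ha.inv
  have hda : MDifferentiableAt 𝓘(ℝ, ℝ) I a t := ha.mdifferentiableAt (by simp)
  have hdb : MDifferentiableAt 𝓘(ℝ, ℝ) I (fun s : ℝ => (a s)⁻¹) t :=
    hbsm.mdifferentiableAt (by simp)
  have hμ : MDifferentiableAt (I.prod I) I (fun p : G × G => p.1 * p.2) (a t, (a t)⁻¹) :=
    (contMDiff_mul I (⊤ : ℕ∞)).mdifferentiableAt (by simp)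
  have hsplit := mfderiv_prod_eq_add_comp hμ
  have hprod : mfderiv 𝓘(ℝ, ℝ) (I.prod I) (fun s => (a s, (a s)⁻¹)) t =
      (mfderiv 𝓘(ℝ, ℝ) I a t).prod (mfderiv 𝓘(ℝ, ℝ) I (fun s : ℝ => (a s)⁻¹) t) :=
    hda.mfderiv_prod hdb
  have hcomp := mfderiv_comp_of_eq (I' := I.prod I) hμ (hda.prodMk hdb) rfl
  have hzero : mfderiv 𝓘(ℝ, ℝ) I ((fun p : G × G => p.1 * p.2) ∘ fun s => (a s, (a s)⁻¹)) t
      = 0 := by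
    have hc : ((fun p : G × G => p.1 * p.2) ∘ fun s => (a s, (a s)⁻¹)) = fun _ : ℝ => (1 : G) := by
      funext s; simp
    rw [hc]; exact mfderiv_const
  have key : (0 : TangentSpace I (1 : G)) =
      mfderiv I I (fun y : G => y * (a t)⁻¹) (a t) (mfderiv 𝓘(ℝ, ℝ) I a t (1 : ℝ)) +
      mfderiv I I (fun y : G => a t * y) ((a t)⁻¹)
        (mfderiv 𝓘(ℝ, ℝ) I (fun s : ℝ => (a s)⁻¹) t (1 : ℝ)) := by
    have h1 := congrArg
      (fun (L : TangentSpace 𝓘(ℝ, ℝ) t →L[ℝ] TangentSpace I (1 : G)) => L (1 : ℝ)) hcomp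
    simp only at h1
    rw [hzero, hsplit, hprod] at h1
    exact h1
  -- express a'(t) via a vector in F 1
  have h2 : mfderiv 𝓘(ℝ, ℝ) I a t (1 : ℝ)
      ∈ (F 1).map (mfderiv I I (fun x : G => x * a t) 1 : TangentSpace I (1 : G) →ₗ[ℝ] TangentSpace I (1 * a t)) := by
    rw [← (hbi (a t)).2]; exact hta t
  obtain ⟨v, hv, hva⟩ := h2
  have hRa : mfderiv I I (fun y : G => y * (a t)⁻¹) (a t) (mfderiv 𝓘(ℝ, ℝ) I a t (1 : ℝ)) = v := by
    rw [← hva]; exact aux_right_one (a t) v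
  have hL : mfderiv I I (fun y : G => a t * y) ((a t)⁻¹)
      (mfderiv 𝓘(ℝ, ℝ) I (fun s : ℝ => (a s)⁻¹) t (1 : ℝ)) = -v := by
    have h := key.symm
    rw [hRa] at h
    exact eq_neg_of_add_eq_zero_right h
  have hfinal : mfderiv 𝓘(ℝ, ℝ) I (fun s : ℝ => (a s)⁻¹) t (1 : ℝ)
      = mfderiv I I (fun y : G => (a t)⁻¹ * y) 1 (-v) := by
    have h3 := aux_left_one (a t)
      (mfderiv 𝓘(ℝ, ℝ) I (fun s : ℝ => (a s)⁻¹) t (1 : ℝ))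
    rw [hL] at h3
    exact h3.symm
  rw [hfinal, (hbi ((a t)⁻¹)).1]
  exact Submodule.mem_map_of_mem (f := (mfderiv I I (fun x : G => (a t)⁻¹ * x) 1 : TangentSpace I (1 : G) →ₗ[ℝ] TangentSpace I ((a t)⁻¹ * 1))) (neg_mem hv)
end

section
/- Let G be a Lie group and let F be a bi-invariant distribution on G. Then the set S = { g ∈ G : there exists a smooth curve a : ℝ → G tangent to F with a(0) = e and a(1) = g } is a subgroup of G: it contains e, it is closed under multiplication, and it is closed under inversion. -/
open scoped Manifold

section Aux

variable {E : Type*} [NormedAddCommGroup E] [NormedSpace ℝ E]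
    {H : Type*} [TopologicalSpace H] {I : ModelWithCorners ℝ E H}
    {G : Type*} [TopologicalSpace G] [ChartedSpace H G] [Group G] [LieGroup I (⊤ : ℕ∞) G]

/-- Chain rule for left translations: `L_g ∘ L_h = L_{gh}` on derivatives at 1. -/
lemma auxS5_left_mem (F : ∀ g : G, Submodule ℝ (TangentSpace I g))
    (hbi : ∀ g : G,
      F g = (F 1).map (ContinuousLinearMap.toLinearMap (M₂ := TangentSpace I g) (mfderiv I I (fun x : G => g * x) 1)) ∧
      F g = (F 1).map (ContinuousLinearMap.toLinearMap (M₂ := TangentSpace I g) (mfderiv I I (fun x : G => x * g) 1)))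
    (g h : G) {v : TangentSpace I h} (hv : v ∈ F h) :
    mfderiv I I (fun x : G => g * x) h v ∈ F (g * h) := by
  rw [(hbi h).1] at hv
  obtain ⟨w, hw, rfl⟩ := hv
  rw [(hbi (g * h)).1]
  refine ⟨w, hw, ?_⟩
  have hfun : (fun x : G => g * h * x) = (fun x : G => g * x) ∘ (fun x : G => h * x) := by
    funext x; simp [mul_assoc]
  show mfderiv I I (fun x : G => g * h * x) 1 w = _
  rw [hfun]
  exact mfderiv_comp_apply_of_eq (1 : G) ((contMDiff_mul_left (n := (⊤ : ℕ∞))).mdifferentiableAt (by simp))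
    ((contMDiff_mul_left (n := (⊤ : ℕ∞))).mdifferentiableAt (by simp)) (mul_one h) w

lemma auxS5_right_mem (F : ∀ g : G, Submodule ℝ (TangentSpace I g))
    (hbi : ∀ g : G,
      F g = (F 1).map (ContinuousLinearMap.toLinearMap (M₂ := TangentSpace I g) (mfderiv I I (fun x : G => g * x) 1)) ∧
      F g = (F 1).map (ContinuousLinearMap.toLinearMap (M₂ := TangentSpace I g) (mfderiv I I (fun x : G => x * g) 1)))
    (g h : G) {v : TangentSpace I g} (hv : v ∈ F g) :
    mfderiv I I (fun x : G => x * h) g v ∈ F (g * h) := by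
  rw [(hbi g).2] at hv
  obtain ⟨w, hw, rfl⟩ := hv
  rw [(hbi (g * h)).2]
  refine ⟨w, hw, ?_⟩
  have hfun : (fun x : G => x * (g * h)) = (fun x : G => x * h) ∘ (fun x : G => x * g) := by
    funext x; simp [mul_assoc]
  show mfderiv I I (fun x : G => x * (g * h)) 1 w = _
  rw [hfun]
  exact mfderiv_comp_apply_of_eq (1 : G) ((contMDiff_mul_right (n := (⊤ : ℕ∞))).mdifferentiableAt (by simp))
    ((contMDiff_mul_right (n := (⊤ : ℕ∞))).mdifferentiableAt (by simp)) (one_mul g) w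

/-- Product rule for curves in a Lie group. -/
lemma auxS5_mul_rule (a b : ℝ → G) (t : ℝ)
    (ha : MDifferentiableAt 𝓘(ℝ, ℝ) I a t) (hb : MDifferentiableAt 𝓘(ℝ, ℝ) I b t) :
    mfderiv 𝓘(ℝ, ℝ) I (fun s => a s * b s) t (1 : ℝ) =
      mfderiv I I (fun x : G => x * b t) (a t) (mfderiv 𝓘(ℝ, ℝ) I a t (1 : ℝ)) +
      mfderiv I I (fun x : G => a t * x) (b t) (mfderiv 𝓘(ℝ, ℝ) I b t (1 : ℝ)) := by
  have hmul : MDifferentiableAt (I.prod I) I (fun p : G × G => p.1 * p.2) (a t, b t) :=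
    (contMDiff_mul I (⊤ : ℕ∞) (G := G)).mdifferentiableAt (by simp)
  have hcomp : (fun s => a s * b s) =
      (fun p : G × G => p.1 * p.2) ∘ (fun s => (a s, b s)) := rfl
  rw [hcomp, mfderiv_comp t hmul (ha.prodMk hb)]
  have hpair := ha.mfderiv_prod hb
  simp only [ContinuousLinearMap.comp_apply, hpair]
  exact mfderiv_prod_eq_add_apply hmul


lemma auxS5_dinv_one (v : TangentSpace I (1 : G)) :
    mfderiv I I (fun x : G => x⁻¹) (1 : G) v = -v := by
  have hinv : MDifferentiableAt I I (fun x : G => x⁻¹) (1 : G) :=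
    (contMDiff_inv I (⊤ : ℕ∞) (G := G)).mdifferentiableAt (by simp)
  have hmul : MDifferentiableAt (I.prod I) I (fun p : G × G => p.1 * p.2)
      ((1 : G), (1 : G)⁻¹) :=
    (contMDiff_mul I (⊤ : ℕ∞) (G := G)).mdifferentiableAt (by simp)
  have h0 : mfderiv I I (fun x : G => x * x⁻¹) (1 : G) v = 0 := by
    have : (fun x : G => x * x⁻¹) = fun _ : G => (1 : G) := by
      funext x; exact mul_inv_cancel x
    rw [this, mfderiv_const]; rfl
  have hcomp : (fun x : G => x * x⁻¹) =
      (fun p : G × G => p.1 * p.2) ∘ (fun x : G => (x, x⁻¹)) := rfl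
  have h1 : (mfderiv I I (fun x : G => x * x⁻¹) (1 : G) v : E) =
      HAdd.hAdd (α := E) (β := E) (γ := E) v
        (mfderiv I I (fun x : G => x⁻¹) (1 : G) v) := by
    have hpairm : MDifferentiableAt I (I.prod I) (fun x : G => (x, x⁻¹)) (1 : G) :=
      mdifferentiableAt_id.prodMk hinv
    rw [hcomp, mfderiv_comp (1 : G) hmul hpairm]
    have hd : mfderiv I (I.prod I) (fun x : G => (x, x⁻¹)) (1 : G) =
        (mfderiv I I (fun x : G => x) (1 : G)).prod
          (mfderiv I I (fun x : G => x⁻¹) (1 : G)) :=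
      MDifferentiableAt.mfderiv_prod mdifferentiableAt_id hinv
    have hid : mfderiv I I (fun x : G => x) (1 : G) =
        ContinuousLinearMap.id ℝ (TangentSpace I (1 : G)) := mfderiv_id
    rw [ContinuousLinearMap.comp_apply, hd, hid, mfderiv_prod_eq_add_apply hmul]
    have e1 : (fun z : G => z * (1 : G)⁻¹) = id := by funext z; simp
    have e2 : (fun z : G => (1 : G) * z) = id := by funext z; simp
    rw [e1, e2, mfderiv_id, mfderiv_id]
    rfl
  exact eq_neg_of_add_eq_zero_right (h1.symm.trans h0)

lemma auxS5_inv_mem (F : ∀ g : G, Submodule ℝ (TangentSpace I g))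
    (hbi : ∀ g : G,
      F g = (F 1).map (ContinuousLinearMap.toLinearMap (M₂ := TangentSpace I g) (mfderiv I I (fun x : G => g * x) 1)) ∧
      F g = (F 1).map (ContinuousLinearMap.toLinearMap (M₂ := TangentSpace I g) (mfderiv I I (fun x : G => x * g) 1)))
    (g : G) {v : TangentSpace I g} (hv : v ∈ F g) :
    mfderiv I I (fun x : G => x⁻¹) g v ∈ F g⁻¹ := by
  have hinv1 : MDifferentiableAt I I (fun x : G => x⁻¹) (1 : G) :=
    (contMDiff_inv I (⊤ : ℕ∞) (G := G)).mdifferentiableAt (by simp)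
  have hdecomp : (fun x : G => x⁻¹) =
      ((fun y : G => g⁻¹ * y) ∘ (fun y : G => y⁻¹)) ∘ (fun x : G => x * g⁻¹) := by
    funext x
    simp [Function.comp, mul_inv_rev, ← mul_assoc]
  have houter : MDifferentiableAt I I ((fun y : G => g⁻¹ * y) ∘ (fun y : G => y⁻¹)) (1 : G) :=
    MDifferentiableAt.comp (1 : G) ((contMDiff_mul_left (n := (⊤ : ℕ∞))).mdifferentiableAt (by simp)) hinv1
  have h1 : mfderiv I I (fun x : G => x⁻¹) g v =
      mfderiv I I (fun y : G => g⁻¹ * y) (1 : G)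
        (mfderiv I I (fun y : G => y⁻¹) (1 : G)
          (mfderiv I I (fun x : G => x * g⁻¹) g v)) :=
    Eq.trans (b := mfderiv I I (((fun y : G => g⁻¹ * y) ∘ (fun y : G => y⁻¹)) ∘
            (fun x : G => x * g⁻¹)) g v) (by rw [← hdecomp])
      (Eq.trans
          (mfderiv_comp_apply_of_eq g houter
            ((contMDiff_mul_right (n := (⊤ : ℕ∞))).mdifferentiableAt (by simp)) (mul_inv_cancel g) v)
          (mfderiv_comp_apply_of_eq (1 : G)
            ((contMDiff_mul_left (n := (⊤ : ℕ∞))).mdifferentiableAt (by simp)) hinv1 inv_one _))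
  rw [h1]
  have hu : mfderiv I I (fun x : G => x * g⁻¹) g v ∈ F 1 := by
    have := auxS5_right_mem F hbi g g⁻¹ hv
    rwa [mul_inv_cancel] at this
  have hw : mfderiv I I (fun y : G => y⁻¹) (1 : G)
      (mfderiv I I (fun x : G => x * g⁻¹) g v) ∈ F 1 := by
    erw [auxS5_dinv_one]
    exact (F 1).neg_mem hu
  have := auxS5_left_mem F hbi g⁻¹ 1 hw
  rwa [mul_one] at this

end Aux

/-- For a bi-invariant distribution `F` on a Lie group `G`, the set `S` of
endpoints of `F`-tangent smooth curves starting at the identity is a subgroup of `G`: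
it contains the identity, is closed under multiplication and is closed under inversion. -/
theorem leaf_through_identity_is_subgroup
    {E : Type*} [NormedAddCommGroup E] [NormedSpace ℝ E]
    {H : Type*} [TopologicalSpace H] {I : ModelWithCorners ℝ E H}
    {G : Type*} [TopologicalSpace G] [ChartedSpace H G] [Group G] [LieGroup I (⊤ : ℕ∞) G]
    (F : ∀ g : G, Submodule ℝ (TangentSpace I g))
    (hbi : ∀ g : G,
      F g = (F 1).map (ContinuousLinearMap.toLinearMap (M₂ := TangentSpace I g) (mfderiv I I (fun x : G => g * x) 1)) ∧
      F g = (F 1).map (ContinuousLinearMap.toLinearMap (M₂ := TangentSpace I g) (mfderiv I I (fun x : G => x * g) 1)))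
    (S : Set G)
    (hS : S = {g : G | ∃ a : ℝ → G, ContMDiff 𝓘(ℝ, ℝ) I (⊤ : ℕ∞) a ∧
      (∀ t : ℝ, mfderiv 𝓘(ℝ, ℝ) I a t (1 : ℝ) ∈ F (a t)) ∧ a 0 = 1 ∧ a 1 = g}) :
    (1 : G) ∈ S ∧ (∀ x y : G, x ∈ S → y ∈ S → x * y ∈ S) ∧ (∀ x : G, x ∈ S → x⁻¹ ∈ S) := by
  subst hS
  refine ⟨⟨fun _ => 1, contMDiff_const, ?_, rfl, rfl⟩, ?_, ?_⟩
  · intro t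
    rw [mfderiv_const]
    exact (F 1).zero_mem
  · rintro x y ⟨a, ha, hta, ha0, ha1⟩ ⟨b, hb, htb, hb0, hb1⟩
    refine ⟨fun t => a t * b t, ha.mul hb, ?_, by simp [ha0, hb0],
      by simp [ha1, hb1]⟩
    intro t
    rw [auxS5_mul_rule a b t (ha.mdifferentiableAt (by simp)) (hb.mdifferentiableAt (by simp))]
    exact (F (a t * b t)).add_mem (auxS5_right_mem F hbi _ _ (hta t))
      (auxS5_left_mem F hbi _ _ (htb t))
  · rintro x ⟨a, ha, hta, ha0, ha1⟩
    refine ⟨fun t => (a t)⁻¹, ha.inv, ?_, by simp [ha0], by simp [ha1]⟩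
    intro t
    have hc : (fun t => (a t)⁻¹) = (fun x : G => x⁻¹) ∘ a := rfl
    erw [hc, mfderiv_comp_apply t ((contMDiff_inv I (⊤ : ℕ∞) (G := G)).mdifferentiableAt (by simp))
      (ha.mdifferentiableAt (by simp))]
    exact auxS5_inv_mem F hbi (a t) (hta t)
end
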